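/- The generating function χ^{1,p'}_{a,b,c}(L) (with weight given by the slanted-coordinate prescription) is invariant under reflection: χ^{1,p'}_{a,b,c}(L) = χ^{1,p'}_{p'-a,p'-b,p'-c}(L) for all L ≥ 0, 1 ≤ a,b < p', c = b ± 1. -/
import Mathlib


open Finset

namespace Melzer

/-- Height of the path after `i` steps, starting at `a`; `true` = NE step (+1),
`false` = SE step (-1). -/
def ht (a : ℤ) {L : ℕ} (s : Fin L → Bool) (i : ℕ) : ℤ :=
  a + ∑ j ∈ Finset.range i, (if h : j < L then (if s ⟨j, h⟩ then 1 else -1) else 0)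

/-- `s` encodes a path in `P^{p'}_{a,b}(L)`: all heights lie in `[1, p'-1]` and
the path ends at `b`. -/
def isPath (p' : ℕ) (a b : ℤ) {L : ℕ} (s : Fin L → Bool) : Prop :=
  (∀ i ∈ Finset.range (L + 1), 1 ≤ ht a s i ∧ ht a s i ≤ (p' : ℤ) - 1) ∧ ht a s L = b

instance decIsPath (p' : ℕ) (a b : ℤ) {L : ℕ} (s : Fin L → Bool) :
    Decidable (isPath p' a b s) := by
  unfold isPath; infer_instance

/-- Heights including the extra point `h_{L+1} = c`. -/
def htc (a : ℤ) {L : ℕ} (s : Fin L → Bool) (c : ℤ) (i : ℕ) : ℤ :=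
  if i ≤ L then ht a s i else c

/-- Regime-III weight: `i/2` at each straight vertex, `0` at peaks. -/
def wtIII (a : ℤ) {L : ℕ} (s : Fin L → Bool) (c : ℤ) : ℚ :=
  ∑ i ∈ Finset.Icc 1 L, if htc a s c (i + 1) = htc a s c (i - 1) then 0 else (i : ℚ) / 2

/-- Regime-II weight: `i/2` at each peak vertex, `0` at straight vertices. -/
def wtII (a : ℤ) {L : ℕ} (s : Fin L → Bool) (c : ℤ) : ℚ :=
  ∑ i ∈ Finset.Icc 1 L, if htc a s c (i + 1) = htc a s c (i - 1) then (i : ℚ) / 2 else 0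

/-- Slanted-coordinate weight: at a peak-down vertex the contribution is
`x = (i - (h_i - a))/2`, at a peak-up vertex it is `y = (i + (h_i - a))/2`. -/
def wtSl (a : ℤ) {L : ℕ} (s : Fin L → Bool) (c : ℤ) : ℚ :=
  ∑ i ∈ Finset.Icc 1 L,
    if htc a s c (i + 1) = htc a s c (i - 1) then
      (if htc a s c (i - 1) < htc a s c i then ((i : ℚ) - ((ht a s i - a : ℤ) : ℚ)) / 2
       else ((i : ℚ) + ((ht a s i - a : ℤ) : ℚ)) / 2)
    else 0

/-- `X^{p'}_L(a,b,c;q)`, the ABF (regime-III) finitised generating function. -/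
noncomputable def X (p' : ℕ) (a b c : ℤ) (L : ℕ) (q : ℝ) : ℝ :=
  ∑ s ∈ Finset.univ.filter (fun s : Fin L → Bool => isPath p' a b s),
    q ^ ((wtIII a s c : ℚ) : ℝ)

/-- `x^{p'}_L(a,b,c;q)`, the parafermion (regime-II) finitised generating function. -/
noncomputable def xPara (p' : ℕ) (a b c : ℤ) (L : ℕ) (q : ℝ) : ℝ :=
  ∑ s ∈ Finset.univ.filter (fun s : Fin L → Bool => isPath p' a b s),
    q ^ ((wtII a s c : ℚ) : ℝ)

/-- `χ^{1,p'}_{a,b,c}(L;q)`, generating function for the slanted-coordinate weight. -/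
noncomputable def chiP (p' : ℕ) (a b c : ℤ) (L : ℕ) (q : ℝ) : ℝ :=
  ∑ s ∈ Finset.univ.filter (fun s : Fin L → Bool => isPath p' a b s),
    q ^ ((wtSl a s c : ℚ) : ℝ)

/-- `χ^{p'-1,p'}_{a,b,c}(L;q) = q^{(1/4)(a-b)(a-c)} X^{p'}_L(a,b,c;q)`. -/
noncomputable def chiABF (p' : ℕ) (a b c : ℤ) (L : ℕ) (q : ℝ) : ℝ :=
  q ^ ((((a - b) * (a - c) : ℤ) : ℝ) / 4) * X p' a b c L q

/-- Extended direction sequence: index `0` is the pre-segment (NE iff `e = 1`),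
indices `1..L` are the path segments, index `L+1` is the post-segment (NE iff `f = 0`). -/
def dirsExt {L : ℕ} (s : Fin L → Bool) (e f : ℕ) (i : ℕ) : Bool :=
  if i = 0 then e == 1
  else if h : i - 1 < L then s ⟨i - 1, h⟩
  else f == 0

def runsAux : Bool → ℕ → List Bool → List ℕ
  | _, n, [] => [n]
  | d, n, x :: xs => if x = d then runsAux d (n + 1) xs else n :: runsAux x 1 xs

/-- Run lengths of a list of directions. -/
def runLengths : List Bool → List ℕ
  | [] => []
  | x :: xs => runsAux x 1 xs

/-- The `(e,f)`-striking sequence `(w_1, …, w_l)` of the path `s`. -/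
def strike {L : ℕ} (s : Fin L → Bool) (e f : ℕ) : List ℕ :=
  let r := runLengths (List.ofFn fun i : Fin (L + 2) => dirsExt s e f (i : ℕ))
  r.mapIdx fun i x => x - (if i = 0 then 1 else 0) - (if i = r.length - 1 then 1 else 0)

/-- `m^{(e,f)}(h) = L - l + 2` where `l` is the length of the striking sequence. -/
def mEF {L : ℕ} (s : Fin L → Bool) (e f : ℕ) : ℤ :=
  (L : ℤ) + 2 - (strike s e f).length

/-- The striking-sequence weight
`wt^{(e,f)}(h) = ∑_{i=2}^{l-1} (w_{i-1} + w_{i-3} + ⋯ + w_{1 + (i mod 2)})`. -/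
def wtEF {L : ℕ} (s : Fin L → Bool) (e f : ℕ) : ℕ :=
  ∑ i ∈ Finset.Icc 2 ((strike s e f).length - 1), ∑ j ∈ Finset.Icc 1 (i - 1),
    if j % 2 = (i - 1) % 2 then (strike s e f).getD (j - 1) 0 else 0

/-- `χ^{1,p'}_{a,b,e,f}(L,m;q)`, the restricted generating function. -/
noncomputable def chiRes (p' : ℕ) (a b : ℤ) (e f : ℕ) (L : ℕ) (m : ℤ) (q : ℝ) : ℝ :=
  ∑ s ∈ Finset.univ.filter
      (fun s : Fin L → Bool => isPath p' a b s ∧ mEF s e f = m),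
    q ^ ((wtEF s e f : ℕ) : ℝ)

/-- The Gaussian (q-binomial) polynomial, via the Pascal recurrence. -/
noncomputable def qbinom (q : ℝ) : ℕ → ℕ → ℝ
  | _, 0 => 1
  | 0, _ + 1 => 0
  | A + 1, B + 1 => qbinom q A B + q ^ (B + 1) * qbinom q A (B + 1)

/-- The `B`-transform on striking sequences:
`(w_1, w_2, …, w_{l-1}, w_l) ↦ (w_1, w_2+1, …, w_{l-1}+1, w_l)`. -/
def btransSeq (ws : List ℕ) : List ℕ :=
  ws.mapIdx fun i x => if i = 0 ∨ i = ws.length - 1 then x else x + 1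

/-- Particle insertion on striking sequences:
`(w_1, w_2, …, w_l) ↦ (0, 1, w_1+1, w_2, …, w_l)`. -/
def insertP : List ℕ → List ℕ
  | [] => []
  | w :: rest => 0 :: 1 :: (w + 1) :: rest

/-- A single particle move: in the extended direction sequence a window
`(x, !x, x, x)` (two scoring vertices followed by a non-scoring one) is replaced
by `(x, x, !x, x)` (a non-scoring vertex followed by two scoring ones). -/
def moveRel {L : ℕ} (e f : ℕ) (s s' : Fin L → Bool) : Prop :=
  ∃ j, j + 3 ≤ L + 1 ∧
    (∀ i, i ≠ j + 1 → i ≠ j + 2 → dirsExt s e f i = dirsExt s' e f i) ∧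
    dirsExt s e f (j + 1) = !(dirsExt s e f j) ∧
    dirsExt s e f (j + 2) = dirsExt s e f j ∧
    dirsExt s e f (j + 3) = dirsExt s e f j ∧
    dirsExt s' e f (j + 1) = dirsExt s e f j ∧
    dirsExt s' e f (j + 2) = !(dirsExt s e f j)

lemma ht_flip (p' a : ℤ) {L : ℕ} (s : Fin L → Bool) (i : ℕ) :
    ht (p' - a) (fun j => !(s j)) i = p' - ht a s i := by
  unfold ht
  have : ∀ j ∈ Finset.range i,
      (if h : j < L then (if (!(s ⟨j, h⟩)) then (1:ℤ) else -1) else 0)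
      = -(if h : j < L then (if s ⟨j, h⟩ then (1:ℤ) else -1) else 0) := by
    intro j _
    by_cases h : j < L
    · simp [h]; cases s ⟨j, h⟩ <;> simp
    · simp [h]
  rw [Finset.sum_congr rfl this, Finset.sum_neg_distrib]
  ring

lemma htc_flip (p' a c : ℤ) {L : ℕ} (s : Fin L → Bool) (i : ℕ) :
    htc (p' - a) (fun j => !(s j)) (p' - c) i = p' - htc a s c i := by
  unfold htc
  by_cases h : i ≤ L <;> simp [h, ht_flip]

lemma ht_succ (a : ℤ) {L : ℕ} (s : Fin L → Bool) (k : ℕ) (hk : k < L) :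
    ht a s (k + 1) = ht a s k + (if s ⟨k, hk⟩ then 1 else -1) := by
  unfold ht
  rw [Finset.sum_range_succ, dif_pos hk]
  ring

lemma ht_ne_pred (a : ℤ) {L : ℕ} (s : Fin L → Bool) (i : ℕ) (h1 : 1 ≤ i) (h2 : i ≤ L) :
    ht a s (i - 1) ≠ ht a s i := by
  obtain ⟨k, rfl⟩ : ∃ k, i = k + 1 := ⟨i - 1, by omega⟩
  have hk : k < L := by omega
  rw [ht_succ a s k hk]
  simp only [Nat.add_sub_cancel]
  split <;> omega

lemma wtSl_flip (p' : ℕ) (a c : ℤ) {L : ℕ} (s : Fin L → Bool) :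
    wtSl ((p' : ℤ) - a) (fun j => !(s j)) ((p' : ℤ) - c) = wtSl a s c := by
  unfold wtSl
  refine Finset.sum_congr rfl ?_
  intro i hi
  rw [Finset.mem_Icc] at hi
  rw [htc_flip, htc_flip, htc_flip, ht_flip]
  have hne : ht a s (i - 1) ≠ ht a s i := ht_ne_pred a s i hi.1 hi.2
  have hne' : htc a s c (i - 1) ≠ htc a s c i := by
    unfold htc
    rw [if_pos (by omega : i - 1 ≤ L), if_pos hi.2]
    exact hne
  by_cases h1 : htc a s c (i + 1) = htc a s c (i - 1)
  · rw [if_pos h1, if_pos (by omega)]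
    by_cases h2 : htc a s c (i - 1) < htc a s c i
    · rw [if_pos h2, if_neg (by omega)]
      push_cast
      ring
    · rw [if_neg h2, if_pos (by omega)]
      push_cast
      ring
  · rw [if_neg h1, if_neg (by omega)]

lemma isPath_flip (p' : ℕ) (a b : ℤ) {L : ℕ} (s : Fin L → Bool) :
    isPath p' ((p' : ℤ) - a) ((p' : ℤ) - b) (fun j => !(s j)) ↔ isPath p' a b s := by
  unfold isPath
  simp only [ht_flip, Finset.mem_range]
  constructor
  · rintro ⟨h1, h2⟩
    exact ⟨fun i hi => by have := h1 i hi; omega, by omega⟩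
  · rintro ⟨h1, h2⟩
    exact ⟨fun i hi => by have := h1 i hi; omega, by omega⟩

/-- Reflection symmetry: `χ^{1,p'}_{a,b,c}(L) = χ^{1,p'}_{p'-a,p'-b,p'-c}(L)`. -/
theorem statement2 (p' L : ℕ) (a b c : ℤ)
    (ha : 1 ≤ a ∧ a < (p' : ℤ)) (hb : 1 ≤ b ∧ b < (p' : ℤ))
    (hc : c = b + 1 ∨ c = b - 1)
    (q : ℝ) :
    chiP p' a b c L q = chiP p' ((p' : ℤ) - a) ((p' : ℤ) - b) ((p' : ℤ) - c) L q := by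
  unfold chiP
  refine Finset.sum_nbij' (fun s => fun j => !(s j)) (fun s => fun j => !(s j)) ?_ ?_ ?_ ?_ ?_
  · intro s hs
    simp only [Finset.mem_filter, Finset.mem_univ, true_and] at hs ⊢
    exact (isPath_flip p' a b s).mpr hs
  · intro s hs
    simp only [Finset.mem_filter, Finset.mem_univ, true_and] at hs ⊢
    have := (isPath_flip p' a b (fun j => !(s j))).mp
    simp only [Bool.not_not] at this
    exact this (by convert hs)
  · intro s _
    funext j
    simp
  · intro s _
    funext j
    simp
  · intro s _
    rw [wtSl_flip]

end Melzer
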